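/- The fractional linear map y ↦ (dγ₁y + (1−d)γ₂(1−y))/(γ₁y + γ₂(1−y)) on [0,1], with γ₁, γ₂ > 0, γ₁ ≠ γ₂, and d ∈ (0,1), has a fixed point y* in [0,1] given by y* = (−2γ₂ + dγ₂ + dγ₁ + √(d²γ₂² − 8dγ₁γ₂ + 2d²γ₁γ₂ + 4γ₁γ₂ + d²γ₁²))/(2(γ₁ − γ₂)). -/

import Mathlib

/-- The fractional linear map
`y ↦ (dγ₁y + (1−d)γ₂(1−y))/(γ₁y + γ₂(1−y))` on `[0,1]`, with `γ₁, γ₂ > 0`, `γ₁ ≠ γ₂`,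
`d ∈ (0,1)`, has a fixed point `y* ∈ [0,1]` given by the explicit formula. -/
theorem stmt8 (γ₁ γ₂ d : ℝ) (hγ₁ : 0 < γ₁) (hγ₂ : 0 < γ₂) (hne : γ₁ ≠ γ₂)
    (hd0 : 0 < d) (hd1 : d < 1)
    (ystar : ℝ)
    (hy : ystar = (-2 * γ₂ + d * γ₂ + d * γ₁ +
      Real.sqrt (d ^ 2 * γ₂ ^ 2 - 8 * d * γ₁ * γ₂ + 2 * d ^ 2 * γ₁ * γ₂ +
        4 * γ₁ * γ₂ + d ^ 2 * γ₁ ^ 2)) / (2 * (γ₁ - γ₂))) :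
    ystar ∈ Set.Icc (0 : ℝ) 1 ∧
      (d * γ₁ * ystar + (1 - d) * γ₂ * (1 - ystar)) /
        (γ₁ * ystar + γ₂ * (1 - ystar)) = ystar := by
  have ha : γ₁ - γ₂ ≠ 0 := sub_ne_zero.mpr hne
  have h1d : 0 < 1 - d := by linarith
  set Δ : ℝ := d ^ 2 * γ₂ ^ 2 - 8 * d * γ₁ * γ₂ + 2 * d ^ 2 * γ₁ * γ₂ +
      4 * γ₁ * γ₂ + d ^ 2 * γ₁ ^ 2 with hΔdef
  have hΔnn : 0 ≤ Δ := by
    nlinarith [sq_nonneg (d * (γ₁ - γ₂)), sq_nonneg (1 - d), mul_pos hγ₁ hγ₂]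
  set s := Real.sqrt Δ with hsdef
  have hs0 : 0 ≤ s := Real.sqrt_nonneg _
  have hs2 : s ^ 2 = Δ := Real.sq_sqrt hΔnn
  have hkey : 2 * (γ₁ - γ₂) * ystar = (d * γ₁ + d * γ₂ - 2 * γ₂) + s := by
    rw [hy]; field_simp; ring
  have hquad : (γ₁ - γ₂) * ystar ^ 2 + ((2 - d) * γ₂ - d * γ₁) * ystar
      - (1 - d) * γ₂ = 0 := by
    have hsq : (2 * (γ₁ - γ₂) * ystar - (d * γ₁ + d * γ₂ - 2 * γ₂)) ^ 2 = Δ := by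
      rw [hkey]; ring_nf; linear_combination hs2
    have h4 : 4 * (γ₁ - γ₂) * ((γ₁ - γ₂) * ystar ^ 2 + ((2 - d) * γ₂ - d * γ₁) * ystar
        - (1 - d) * γ₂) = 0 := by linear_combination hsq
    have h4a : (4 : ℝ) * (γ₁ - γ₂) ≠ 0 := by
      intro h; apply ha; linarith [mul_eq_zero.mp h]
    rcases mul_eq_zero.mp h4 with h | h
    · exact absurd h h4a
    · exact h
  -- upper bound helper: if Δ ≤ t² and 0 ≤ t then s ≤ t
  have hub : ∀ t : ℝ, 0 ≤ t → Δ ≤ t ^ 2 → s ≤ t := by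
    intro t ht h
    have := Real.sqrt_le_sqrt h
    rwa [Real.sqrt_sq ht] at this
  -- lower bound helper: if t² < Δ then t < s
  have hlb : ∀ t : ℝ, t ^ 2 < Δ → t < s := by
    intro t h
    rcases lt_or_ge t 0 with ht | ht
    · exact lt_of_lt_of_le ht hs0
    · exact (Real.lt_sqrt ht).mpr h
  have h01 : 0 ≤ ystar ∧ ystar ≤ 1 := by
    rcases lt_or_gt_of_ne hne with hlt | hgt
    · -- γ₁ < γ₂
      have hb : 0 < (2 - d) * γ₂ - d * γ₁ := by nlinarith
      constructor
      · have hsb : s ≤ (2 - d) * γ₂ - d * γ₁ := by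
          apply hub _ hb.le
          have hid : ((2 - d) * γ₂ - d * γ₁) ^ 2 - Δ = 4 * (γ₂ - γ₁) * (1 - d) * γ₂ := by
            rw [hΔdef]; ring
          linarith [mul_pos (mul_pos (sub_pos.mpr hlt) h1d) hγ₂]
        have hnum : 2 * (γ₁ - γ₂) * ystar ≤ 0 := by rw [hkey]; linarith
        have hpos : (0:ℝ) < 2 * (γ₂ - γ₁) := by linarith
        have := (mul_le_mul_iff_right₀ hpos).mp
          (show 2 * (γ₂ - γ₁) * 0 ≤ 2 * (γ₂ - γ₁) * ystar by nlinarith)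
        linarith
      · have h2ab : 2 * (γ₁ - γ₂) + ((2 - d) * γ₂ - d * γ₁) ≤ s := by
          rcases le_or_gt (2 * (γ₁ - γ₂) + ((2 - d) * γ₂ - d * γ₁)) 0 with h | h
          · linarith
          · refine le_of_lt (hlb _ ?_)
            have hid : Δ - (2 * (γ₁ - γ₂) + ((2 - d) * γ₂ - d * γ₁)) ^ 2
                = 4 * (γ₂ - γ₁) * (1 - d) * γ₁ := by rw [hΔdef]; ring
            linarith [mul_pos (mul_pos (sub_pos.mpr hlt) h1d) hγ₁]
        have hnum : 2 * (γ₁ - γ₂) * ystar ≥ 2 * (γ₁ - γ₂) := by rw [hkey]; linarith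
        have hpos : (0:ℝ) < 2 * (γ₂ - γ₁) := by linarith
        have := (mul_le_mul_iff_right₀ hpos).mp
          (show 2 * (γ₂ - γ₁) * ystar ≤ 2 * (γ₂ - γ₁) * 1 by nlinarith)
        linarith
    · -- γ₂ < γ₁
      constructor
      · have hbs : (2 - d) * γ₂ - d * γ₁ < s := by
          apply hlb
          have hid : Δ - ((2 - d) * γ₂ - d * γ₁) ^ 2 = 4 * (γ₁ - γ₂) * (1 - d) * γ₂ := by
            rw [hΔdef]; ring
          linarith [mul_pos (mul_pos (sub_pos.mpr hgt) h1d) hγ₂]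
        have hnum : 0 ≤ 2 * (γ₁ - γ₂) * ystar := by rw [hkey]; linarith
        have hpos : (0:ℝ) < 2 * (γ₁ - γ₂) := by linarith
        have := (mul_le_mul_iff_right₀ hpos).mp
          (show 2 * (γ₁ - γ₂) * 0 ≤ 2 * (γ₁ - γ₂) * ystar by nlinarith)
        linarith
      · have h2ab0 : 0 < 2 * (γ₁ - γ₂) + ((2 - d) * γ₂ - d * γ₁) := by nlinarith
        have hsb : s ≤ 2 * (γ₁ - γ₂) + ((2 - d) * γ₂ - d * γ₁) := by
          apply hub _ h2ab0.le
          have hid : (2 * (γ₁ - γ₂) + ((2 - d) * γ₂ - d * γ₁)) ^ 2 - Δ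
              = 4 * (γ₁ - γ₂) * (1 - d) * γ₁ := by rw [hΔdef]; ring
          linarith [mul_pos (mul_pos (sub_pos.mpr hgt) h1d) hγ₁]
        have hnum : 2 * (γ₁ - γ₂) * ystar ≤ 2 * (γ₁ - γ₂) := by rw [hkey]; linarith
        have hpos : (0:ℝ) < 2 * (γ₁ - γ₂) := by linarith
        have := (mul_le_mul_iff_right₀ hpos).mp
          (show 2 * (γ₁ - γ₂) * ystar ≤ 2 * (γ₁ - γ₂) * 1 by nlinarith)
        linarith
  obtain ⟨h0, h1⟩ := h01
  have hD : 0 < γ₁ * ystar + γ₂ * (1 - ystar) := by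
    nlinarith [mul_nonneg hγ₁.le h0, mul_nonneg hγ₂.le (by linarith : (0:ℝ) ≤ 1 - ystar),
      mul_nonneg (mul_nonneg hγ₁.le h0) (by linarith : (0:ℝ) ≤ 1 - ystar),
      mul_pos hγ₁ hγ₂]
  refine ⟨⟨h0, h1⟩, ?_⟩
  rw [div_eq_iff hD.ne']
  linear_combination -hquad
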